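/- Let φx, φy, α, β be real numbers and set M = exp(−φx•(cos α • X + sin α • Y)) · exp(φy•(cos β • X + sin β • Y)). Then the (1,1) entry of M equals cos(φx/2)·cos(φy/2) + e^{i(α−β)}·sin(φx/2)·sin(φy/2). (Applied with α = θx − zx and β = θy − zx, this gives the equation cos(φ/2)e^{iz/2} = cos(φx/2)cos(φy/2) + e^{i(θx−θy)}sin(φx/2)sin(φy/2) for the cylindrical coordinates (φ,θ,z) of x⁻¹y in SU(2).) -/

import Mathlib

set_option maxHeartbeats 1000000


open scoped Matrix

/-- Halved Pauli matrix `X` generating `su(2)`. -/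
noncomputable def X : Matrix (Fin 2) (Fin 2) ℂ := (1 / 2 : ℂ) • !![0, 1; -1, 0]

/-- Halved Pauli matrix `Y` generating `su(2)`. -/
noncomputable def Y : Matrix (Fin 2) (Fin 2) ℂ :=
  (1 / 2 : ℂ) • !![0, Complex.I; Complex.I, 0]

open Complex in
lemma su2_exp_key (φ α : ℝ) :
    NormedSpace.exp (φ • (Real.cos α • X + Real.sin α • Y)) =
      !![(Real.cos (φ / 2) : ℂ), Complex.exp ((α : ℂ) * I) * (Real.sin (φ / 2) : ℂ);
         -(Complex.exp (-((α : ℂ) * I)) * (Real.sin (φ / 2) : ℂ)), (Real.cos (φ / 2) : ℂ)] := by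
  set w : ℂ := Complex.exp ((α : ℂ) * I) with hw
  have hw0 : w ≠ 0 := Complex.exp_ne_zero _
  set t : ℂ := ((φ / 2 : ℝ) : ℂ) with ht
  set P : Matrix (Fin 2) (Fin 2) ℂ := !![w, w; I, -I] with hP
  set Q : Matrix (Fin 2) (Fin 2) ℂ :=
    (-(2 * I * w))⁻¹ • !![-I, -w; -I, w] with hQ
  have hc : (-(2 * I * w)) ≠ 0 := by
    simp [I_ne_zero, hw0]
  have hI3 : (I : ℂ) ^ 3 = -I := by
    simp [pow_succ, Complex.I_mul_I]
  have hPQ : P * Q = 1 := by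
    ext i j
    fin_cases i <;> fin_cases j <;>
      simp [hP, hQ, Matrix.mul_apply, Fin.sum_univ_two, Matrix.one_apply] <;>
      (field_simp; try simp only [Complex.I_sq]; ring)
  have hU : IsUnit P := (Matrix.isUnit_iff_isUnit_det P).mpr (Matrix.isUnit_det_of_right_inverse hPQ)
  have hQinv : P⁻¹ = Q := Matrix.inv_eq_right_inv hPQ
  have hwinv : Complex.exp (-((α : ℂ) * I)) = w⁻¹ := by
    rw [hw, ← Complex.exp_neg]
  have hcosα : (Real.cos α : ℂ) = (w + w⁻¹) / 2 := by
    rw [Complex.ofReal_cos, ← hwinv, hw, Complex.cos, neg_mul]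
  have hsinα : (Real.sin α : ℂ) = (w⁻¹ - w) * I / 2 := by
    rw [Complex.ofReal_sin, ← hwinv, hw, Complex.sin, neg_mul]
  have hdiag : Matrix.diagonal ![I * t, -(I * t)] =
      !![I * t, 0; 0, -(I * t)] := by
    ext i j; fin_cases i <;> fin_cases j <;> simp
  have hA : φ • (Real.cos α • X + Real.sin α • Y) =
      P * Matrix.diagonal ![I * t, -(I * t)] * Q := by
    rw [hdiag]
    ext i j
    fin_cases i <;> fin_cases j <;>
      simp [hP, hQ, X, Y, Matrix.mul_apply, Fin.sum_univ_two, Complex.real_smul,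
        hcosα, hsinα, ht] <;>
      (try field_simp [hw0, Complex.I_ne_zero, Complex.exp_ne_zero]) <;> (try ring_nf) <;> (try simp only [Complex.I_sq, hI3, Complex.I_pow_four]) <;>
      (try ring_nf) <;> (try ring)
  rw [hA, ← hQinv, Matrix.exp_conj P _ hU, Matrix.exp_diagonal, hQinv, Pi.exp_def]
  have hexp : ∀ z : ℂ, NormedSpace.exp z = Complex.exp z := fun z =>
    (congrFun Complex.exp_eq_exp_ℂ z).symm
  set u : ℂ := Complex.exp (t * I) with hu
  have hu0 : u ≠ 0 := Complex.exp_ne_zero _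
  have huinv : Complex.exp (-(t * I)) = u⁻¹ := by rw [hu, ← Complex.exp_neg]
  have hcost : (Real.cos (φ / 2) : ℂ) = (u + u⁻¹) / 2 := by
    rw [Complex.ofReal_cos, ← huinv, hu, ht, Complex.cos, neg_mul]
  have hsint : (Real.sin (φ / 2) : ℂ) = (u⁻¹ - u) * I / 2 := by
    rw [Complex.ofReal_sin, ← huinv, hu, ht, Complex.sin, neg_mul]
  have h1 : NormedSpace.exp (I * t) = u := by rw [hexp, hu, mul_comm]
  have h2 : NormedSpace.exp (-(I * t)) = u⁻¹ := by
    rw [hexp, ← huinv]; ring_nf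
  have hdiag2 : Matrix.diagonal (fun i => NormedSpace.exp (![I * t, -(I * t)] i)) =
      !![u, 0; 0, u⁻¹] := by
    ext i j; fin_cases i <;> fin_cases j <;> simp [h1, h2]
  rw [hdiag2]
  ext i j
  fin_cases i <;> fin_cases j <;>
    simp [hP, hQ, Matrix.mul_apply, Fin.sum_univ_two, hcost, hsint,
      hwinv, h1, h2, Matrix.cons_val_zero, Matrix.cons_val_one] <;>
    (try field_simp [hw0, hu0, Complex.I_ne_zero]) <;> (try ring_nf) <;>
    (try simp only [Complex.I_sq, hI3]) <;> (try ring_nf) <;>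
    (try field_simp [hw0, Complex.I_ne_zero, Complex.exp_ne_zero]) <;> (try ring_nf) <;> (try simp only [Complex.I_sq, hI3]) <;>
    (try ring_nf) <;> (try ring)

/-- The (1,1) entry of
`exp(−φx•(cos α • X + sin α • Y)) · exp(φy•(cos β • X + sin β • Y))` equals
`cos(φx/2)cos(φy/2) + e^{i(α−β)} sin(φx/2) sin(φy/2)`. -/
theorem su2_product_entry_one_one (φx φy α β : ℝ) :
    (NormedSpace.exp ((-φx) • (Real.cos α • X + Real.sin α • Y)) *
        NormedSpace.exp (φy • (Real.cos β • X + Real.sin β • Y))) 0 0 =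
      (Real.cos (φx / 2) : ℂ) * (Real.cos (φy / 2) : ℂ) +
        Complex.exp (Complex.I * ((α - β : ℝ) : ℂ)) * (Real.sin (φx / 2) : ℂ) *
          (Real.sin (φy / 2) : ℂ) := by
  rw [su2_exp_key, su2_exp_key, Matrix.mul_apply, Fin.sum_univ_two]
  have h : Complex.exp ((α : ℂ) * Complex.I) * Complex.exp (-((β : ℂ) * Complex.I)) =
      Complex.exp (Complex.I * ((α - β : ℝ) : ℂ)) := by
    rw [← Complex.exp_add]
    congr 1
    push_cast
    ring
  simp [neg_div, Real.cos_neg, Real.sin_neg, ← h]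
  push_cast at h
  rw [← h]
  ring
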